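/- In e(p), for each l with 0 ≤ l ≤ ⌊p/2⌋ and k = p - 2l, the subalgebra M = span{L₁₂, L₃₄, …, L_{2l-1,2l}, P_{2l+1}, …, P_p} is abelian of dimension l + k, and M equals its own centralizer in e(p) (i.e., M is a MASA). -/
import Mathlib

open Matrix

noncomputable section

/-- The rotation generator in the plane of coordinates `2i, 2i+1` (0-based)
inside `e(p)` realized as `(p+1)×(p+1)` matrices. -/
def Lrot (p i : ℕ) : Matrix (Fin (p+1)) (Fin (p+1)) ℝ :=
  Matrix.of fun a b =>
    if (a : ℕ) = 2*i ∧ (b : ℕ) = 2*i+1 then 1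
    else if (a : ℕ) = 2*i+1 ∧ (b : ℕ) = 2*i then -1 else 0

/-- The translation generator in coordinate `j` (0-based) inside `e(p)`. -/
def Ptr (p j : ℕ) : Matrix (Fin (p+1)) (Fin (p+1)) ℝ :=
  Matrix.of fun a b => if (a : ℕ) = j ∧ (b : ℕ) = p then 1 else 0

/-- The Euclidean Lie algebra `e(p)`: matrices `[[X,α],[0,0]]` with `X` skew. -/
def eucAlg (p : ℕ) : Set (Matrix (Fin (p+1)) (Fin (p+1)) ℝ) :=
  {M | ∃ (X : Matrix (Fin p) (Fin p) ℝ) (α : Matrix (Fin p) (Fin 1) ℝ), Xᵀ = -X ∧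
    M = Matrix.reindex finSumFinEquiv finSumFinEquiv (Matrix.fromBlocks X α 0 0)}

/-- The standard split MASA `span{L₁₂, …, L_{2l-1,2l}} ⊕ span{P_{2l+1}, …, P_p}`. -/
def stdMASA (p l : ℕ) : Submodule ℝ (Matrix (Fin (p+1)) (Fin (p+1)) ℝ) :=
  Submodule.span ℝ
    ({M | ∃ i < l, M = Lrot p i} ∪ {M | ∃ j, 2*l ≤ j ∧ j < p ∧ M = Ptr p j})

section Aux
variable {p l : ℕ}

lemma sum_ite_val {p : ℕ} (j : ℕ) (hj : j < p+1) (f : Fin (p+1) → ℝ) :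
    ∑ c : Fin (p+1), (if (c:ℕ) = j then f c else 0) = f ⟨j, hj⟩ := by
  have : ∀ c : Fin (p+1), (if (c:ℕ) = j then f c else 0)
      = (if c = ⟨j, hj⟩ then f c else 0) := by
    intro c; congr 1; simp [Fin.ext_iff]
  simp_rw [this]
  simp

lemma mul_Ptr_apply {p : ℕ} (A : Matrix (Fin (p+1)) (Fin (p+1)) ℝ) (j : ℕ) (hj : j < p)
    (a b : Fin (p+1)) :
    (A * Ptr p j) a b = if (b:ℕ) = p then A a ⟨j, by omega⟩ else 0 := by
  rw [Matrix.mul_apply]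
  by_cases hb : (b:ℕ) = p
  · rw [if_pos hb, ← sum_ite_val j (by omega) (fun c => A a c)]
    apply Finset.sum_congr rfl
    intro c _
    by_cases hc : (c:ℕ) = j <;> simp [Ptr, hc, hb]
  · rw [if_neg hb]
    apply Finset.sum_eq_zero
    intro c _
    simp [Ptr, hb]

lemma Ptr_mul_apply {p : ℕ} (A : Matrix (Fin (p+1)) (Fin (p+1)) ℝ) (j : ℕ)
    (a b : Fin (p+1)) :
    (Ptr p j * A) a b = if (a:ℕ) = j then A (Fin.last p) b else 0 := by
  rw [Matrix.mul_apply]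
  by_cases ha : (a:ℕ) = j
  · rw [if_pos ha, show (Fin.last p) = (⟨p, by omega⟩ : Fin (p+1)) from rfl,
      ← sum_ite_val p (by omega) (fun c => A c b)]
    apply Finset.sum_congr rfl
    intro c _
    by_cases hc : (c:ℕ) = p <;> simp [Ptr, hc, ha]
  · rw [if_neg ha]
    apply Finset.sum_eq_zero
    intro c _
    simp [Ptr, ha]

lemma mul_Lrot_apply {p : ℕ} (A : Matrix (Fin (p+1)) (Fin (p+1)) ℝ) (i : ℕ) (hi : 2*i+1 ≤ p)
    (a b : Fin (p+1)) :
    (A * Lrot p i) a b =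
      if (b:ℕ) = 2*i+1 then A a ⟨2*i, by omega⟩
      else if (b:ℕ) = 2*i then -A a ⟨2*i+1, by omega⟩ else 0 := by
  rw [Matrix.mul_apply]
  by_cases hb1 : (b:ℕ) = 2*i+1
  · rw [if_pos hb1, ← sum_ite_val (2*i) (by omega) (fun c => A a c)]
    apply Finset.sum_congr rfl
    intro c _
    by_cases hc : (c:ℕ) = 2*i <;> simp [Lrot, hc, hb1] <;> omega
  · rw [if_neg hb1]
    by_cases hb2 : (b:ℕ) = 2*i
    · rw [if_pos hb2]
      trans (∑ c : Fin (p+1), if (c:ℕ) = 2*i+1 then -A a c else 0)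
      · apply Finset.sum_congr rfl
        intro c _
        by_cases hc : (c:ℕ) = 2*i+1 <;> simp [Lrot, hc, hb2] <;> omega
      · exact sum_ite_val (2*i+1) (by omega) (fun c => -A a c)
    · rw [if_neg hb2]
      apply Finset.sum_eq_zero
      intro c _
      simp [Lrot, hb1, hb2]

lemma Lrot_mul_apply {p : ℕ} (A : Matrix (Fin (p+1)) (Fin (p+1)) ℝ) (i : ℕ) (hi : 2*i+1 ≤ p)
    (a b : Fin (p+1)) :
    (Lrot p i * A) a b =
      if (a:ℕ) = 2*i then A ⟨2*i+1, by omega⟩ b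
      else if (a:ℕ) = 2*i+1 then -A ⟨2*i, by omega⟩ b else 0 := by
  rw [Matrix.mul_apply]
  by_cases ha1 : (a:ℕ) = 2*i
  · rw [if_pos ha1, ← sum_ite_val (2*i+1) (by omega) (fun c => A c b)]
    apply Finset.sum_congr rfl
    intro c _
    by_cases hc : (c:ℕ) = 2*i+1 <;> simp [Lrot, hc, ha1] <;> omega
  · rw [if_neg ha1]
    by_cases ha2 : (a:ℕ) = 2*i+1
    · rw [if_pos ha2]
      trans (∑ c : Fin (p+1), if (c:ℕ) = 2*i then -A c b else 0)
      · apply Finset.sum_congr rfl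
        intro c _
        by_cases hc : (c:ℕ) = 2*i <;> simp [Lrot, hc, ha2] <;> omega
      · exact sum_ite_val (2*i) (by omega) (fun c => -A c b)
    · rw [if_neg ha2]
      apply Finset.sum_eq_zero
      intro c _
      simp [Lrot, ha1, ha2]

lemma Lrot_mul_Lrot {i i' : ℕ} (hne : i ≠ i') : Lrot p i * Lrot p i' = 0 := by
  ext a b
  rw [Matrix.mul_apply]
  simp only [Matrix.zero_apply]
  apply Finset.sum_eq_zero
  intro c _
  simp only [Lrot, Matrix.of_apply]
  split_ifs <;> (first | (exfalso; omega) | norm_num)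

lemma Lrot_mul_Ptr {i j : ℕ} (hij : 2*i+1 < j) : Lrot p i * Ptr p j = 0 := by
  ext a b
  rw [Matrix.mul_apply]
  simp only [Matrix.zero_apply]
  apply Finset.sum_eq_zero
  intro c _
  simp only [Lrot, Ptr, Matrix.of_apply]
  split_ifs <;> (first | (exfalso; omega) | norm_num)

lemma Ptr_mul_Lrot {i j : ℕ} (hi : 2*i+1 < p) : Ptr p j * Lrot p i = 0 := by
  ext a b
  rw [Matrix.mul_apply]
  simp only [Matrix.zero_apply]
  apply Finset.sum_eq_zero
  intro c _
  simp only [Lrot, Ptr, Matrix.of_apply]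
  have hc : (c : ℕ) < p + 1 := c.isLt
  split_ifs <;> (first | (exfalso; omega) | norm_num)

lemma Ptr_mul_Ptr {j j' : ℕ} (hj' : j' < p) : Ptr p j * Ptr p j' = 0 := by
  ext a b
  rw [Matrix.mul_apply]
  simp only [Matrix.zero_apply]
  apply Finset.sum_eq_zero
  intro c _
  simp only [Ptr, Matrix.of_apply]
  split_ifs <;> (first | (exfalso; omega) | norm_num)

lemma gen_comm (h : 2*l ≤ p)
    {A B : Matrix (Fin (p+1)) (Fin (p+1)) ℝ}
    (hA : A ∈ ({M | ∃ i < l, M = Lrot p i} ∪ {M | ∃ j, 2*l ≤ j ∧ j < p ∧ M = Ptr p j} :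
      Set (Matrix (Fin (p+1)) (Fin (p+1)) ℝ)))
    (hB : B ∈ ({M | ∃ i < l, M = Lrot p i} ∪ {M | ∃ j, 2*l ≤ j ∧ j < p ∧ M = Ptr p j} :
      Set (Matrix (Fin (p+1)) (Fin (p+1)) ℝ))) : A * B = B * A := by
  rcases hA with ⟨i, hi, rfl⟩ | ⟨j, hj1, hj2, rfl⟩ <;>
    rcases hB with ⟨i', hi', rfl⟩ | ⟨j', hj1', hj2', rfl⟩
  · rcases eq_or_ne i i' with rfl | hne
    · rfl
    · rw [Lrot_mul_Lrot hne, Lrot_mul_Lrot (Ne.symm hne)]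
  · rw [Lrot_mul_Ptr (by omega), Ptr_mul_Lrot (by omega)]
  · rw [Lrot_mul_Ptr (by omega), Ptr_mul_Lrot (by omega)]
  · rw [Ptr_mul_Ptr hj2', Ptr_mul_Ptr hj2]

lemma masa_comm (h : 2*l ≤ p) :
    ∀ A ∈ stdMASA p l, ∀ B ∈ stdMASA p l, A * B = B * A := by
  set S : Set (Matrix (Fin (p+1)) (Fin (p+1)) ℝ) :=
    {M | ∃ i < l, M = Lrot p i} ∪ {M | ∃ j, 2*l ≤ j ∧ j < p ∧ M = Ptr p j} with hS
  have key : ∀ C : Matrix (Fin (p+1)) (Fin (p+1)) ℝ,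
      (∀ B ∈ S, C * B = B * C) → ∀ B ∈ stdMASA p l, C * B = B * C := by
    intro C hC
    have : stdMASA p l ≤ LinearMap.ker
        (LinearMap.mulLeft ℝ C - LinearMap.mulRight ℝ C) := by
      rw [stdMASA, Submodule.span_le]
      intro B hB
      simp only [SetLike.mem_coe, LinearMap.mem_ker, LinearMap.sub_apply,
        LinearMap.mulLeft_apply, LinearMap.mulRight_apply, sub_eq_zero]
      exact hC B hB
    intro B hB
    have := this hB
    simpa only [LinearMap.mem_ker, LinearMap.sub_apply, LinearMap.mulLeft_apply,
      LinearMap.mulRight_apply, sub_eq_zero] using this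
  intro A hA B hB
  have step1 : ∀ C ∈ S, C * B = B * C := by
    intro C hC
    exact key C (fun B' hB' => gen_comm h hC hB') B hB
  have := key B (fun C hC => (step1 C hC).symm) A hA
  exact this.symm

/-- the basis family -/
def basFam (p l : ℕ) : Fin l ⊕ Fin (p - 2*l) → Matrix (Fin (p+1)) (Fin (p+1)) ℝ :=
  Sum.elim (fun i => Lrot p (i : ℕ)) (fun j => Ptr p (2*l + (j : ℕ)))

lemma range_basFam (h : 2*l ≤ p) :
    Set.range (basFam p l) =
      ({M | ∃ i < l, M = Lrot p i} ∪ {M | ∃ j, 2*l ≤ j ∧ j < p ∧ M = Ptr p j}) := by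
  ext M
  constructor
  · rintro ⟨(i | j), rfl⟩
    · exact Or.inl ⟨i, i.isLt, rfl⟩
    · exact Or.inr ⟨2*l + (j : ℕ), by omega, by have := j.isLt; omega, rfl⟩
  · rintro (⟨i, hi, rfl⟩ | ⟨j, hj1, hj2, rfl⟩)
    · exact ⟨Sum.inl ⟨i, hi⟩, rfl⟩
    · refine ⟨Sum.inr ⟨j - 2*l, by omega⟩, ?_⟩
      simp only [basFam, Sum.elim_inr]
      show Ptr p (2*l + (j - 2*l)) = Ptr p j
      rw [Nat.add_sub_cancel' hj1]

lemma linIndep_basFam (h : 2*l ≤ p) : LinearIndependent ℝ (basFam p l) := by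
  rw [Fintype.linearIndependent_iff]
  intro g hg
  have hgfun : ∀ a b : Fin (p+1),
      (∑ s, g s • basFam p l s) a b = 0 := by
    intro a b; rw [hg]; rfl
  intro s
  rcases s with i | j
  · have hi := i.isLt
    have key := hgfun ⟨2*(i:ℕ), by omega⟩ ⟨2*(i:ℕ)+1, by omega⟩
    rw [Matrix.sum_apply] at key
    rw [Finset.sum_eq_single (Sum.inl i)] at key
    · simpa [basFam, Lrot] using key
    · rintro (i' | j') _ hne
      · have hne' : (i' : ℕ) ≠ (i : ℕ) := by
          simpa [Fin.ext_iff] using hne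
        simp only [basFam, Sum.elim_inl, Matrix.smul_apply, Lrot, Matrix.of_apply]
        have := i'.isLt
        split_ifs <;> (first | (exfalso; omega) | simp)
      · simp only [basFam, Sum.elim_inr, Matrix.smul_apply, Ptr, Matrix.of_apply]
        split_ifs <;> (first | (exfalso; omega) | simp)
    · intro habs; exact absurd (Finset.mem_univ _) habs
  · have hj := j.isLt
    have key := hgfun ⟨2*l + (j:ℕ), by omega⟩ (Fin.last p)
    rw [Matrix.sum_apply] at key
    rw [Finset.sum_eq_single (Sum.inr j)] at key
    · simpa [basFam, Ptr] using key
    · rintro (i' | j') _ hne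
      · simp only [basFam, Sum.elim_inl, Matrix.smul_apply, Lrot, Matrix.of_apply]
        have := i'.isLt
        split_ifs <;> (first | (exfalso; simp only [Fin.val_last] at *; omega) | simp)
      · have hne' : (j' : ℕ) ≠ (j : ℕ) := by
          simpa [Fin.ext_iff] using hne
        simp only [basFam, Sum.elim_inr, Matrix.smul_apply, Ptr, Matrix.of_apply]
        split_ifs <;> (first | (exfalso; omega) | simp)
    · intro habs; exact absurd (Finset.mem_univ _) habs

lemma finrank_stdMASA (h : 2*l ≤ p) :
    Module.finrank ℝ (stdMASA p l) = l + (p - 2*l) := by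
  have : stdMASA p l = Submodule.span ℝ (Set.range (basFam p l)) := by
    rw [stdMASA, range_basFam h]
  rw [this, finrank_span_eq_card (linIndep_basFam h)]
  simp

lemma symm_last {p : ℕ} : (finSumFinEquiv (n := 1)).symm (Fin.last p) = Sum.inr 0 := by
  rw [Equiv.symm_apply_eq]
  apply Fin.ext
  simp [finSumFinEquiv]

lemma symm_lt {p : ℕ} (a : Fin (p+1)) (ha : (a:ℕ) < p) :
    (finSumFinEquiv (n := 1)).symm a = Sum.inl ⟨a, ha⟩ := by
  rw [Equiv.symm_apply_eq]
  apply Fin.ext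
  simp [finSumFinEquiv]

lemma euc_row {p : ℕ} {A : Matrix (Fin (p+1)) (Fin (p+1)) ℝ} (hA : A ∈ eucAlg p)
    (b : Fin (p+1)) : A (Fin.last p) b = 0 := by
  obtain ⟨X, α, hX, rfl⟩ := hA
  rw [Matrix.reindex_apply, Matrix.submatrix_apply, symm_last]
  rcases (finSumFinEquiv (n := 1)).symm b with c | c <;> simp

lemma euc_diag {p : ℕ} {A : Matrix (Fin (p+1)) (Fin (p+1)) ℝ} (hA : A ∈ eucAlg p)
    (a : Fin (p+1)) (ha : (a:ℕ) < p) : A a a = 0 := by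
  obtain ⟨X, α, hX, rfl⟩ := hA
  rw [Matrix.reindex_apply, Matrix.submatrix_apply, symm_lt a ha]
  have h1 : X ⟨a, ha⟩ ⟨a, ha⟩ = -X ⟨a, ha⟩ ⟨a, ha⟩ := by
    conv_lhs => rw [show X ⟨a, ha⟩ ⟨a, ha⟩ = Xᵀ ⟨a, ha⟩ ⟨a, ha⟩ from rfl, hX]
    simp
  have : X ⟨a, ha⟩ ⟨a, ha⟩ = 0 := by linarith
  simpa using this

lemma masa_max (h : 2*l ≤ p) {A : Matrix (Fin (p+1)) (Fin (p+1)) ℝ}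
    (hA : A ∈ eucAlg p) (hc : ∀ B ∈ stdMASA p l, A * B = B * A) : A ∈ stdMASA p l := by
  have hrow := euc_row hA
  have hdiag := euc_diag hA
  -- columns 2l..p-1 of A vanish
  have hcol : ∀ j, 2*l ≤ j → ∀ (hj2 : j < p) (a : Fin (p+1)), A a ⟨j, by omega⟩ = 0 := by
    intro j hj1 hj2 a
    have hcm := hc (Ptr p j) (Submodule.subset_span (Or.inr ⟨j, hj1, hj2, rfl⟩))
    have e := congrFun (congrFun hcm a) (Fin.last p)
    rw [mul_Ptr_apply A j hj2, Ptr_mul_apply A j] at e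
    rw [hrow] at e
    simpa using e
  -- Lrot commutation equations
  have hL : ∀ i (hi : i < l), ∀ a b : Fin (p+1),
      (if (b:ℕ) = 2*i+1 then A a ⟨2*i, by omega⟩
        else if (b:ℕ) = 2*i then -A a ⟨2*i+1, by omega⟩ else 0)
      = (if (a:ℕ) = 2*i then A ⟨2*i+1, by omega⟩ b
        else if (a:ℕ) = 2*i+1 then -A ⟨2*i, by omega⟩ b else 0) := by
    intro i hi a b
    have hcm := hc (Lrot p i) (Submodule.subset_span (Or.inl ⟨i, hi, rfl⟩))
    have e := congrFun (congrFun hcm a) b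
    rwa [mul_Lrot_apply A i (by omega), Lrot_mul_apply A i (by omega)] at e
  -- column 2i off-block zero
  have hc1 : ∀ i, i < l → ∀ a : Fin (p+1), (a:ℕ) ≠ 2*i → (a:ℕ) ≠ 2*i+1 →
      ∀ (hb : 2*i < p+1), A a ⟨2*i, hb⟩ = 0 := by
    intro i hi a ha1 ha2 hb
    have e := hL i hi a ⟨2*i+1, by omega⟩
    rw [if_pos (show ((⟨2*i+1, by omega⟩ : Fin (p+1)) : ℕ) = 2*i+1 from rfl),
      if_neg ha1, if_neg ha2] at e
    exact e
  -- column 2i+1 off-block zero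
  have hc2 : ∀ i, i < l → ∀ a : Fin (p+1), (a:ℕ) ≠ 2*i → (a:ℕ) ≠ 2*i+1 →
      ∀ (hb : 2*i+1 < p+1), A a ⟨2*i+1, hb⟩ = 0 := by
    intro i hi a ha1 ha2 hb
    have e := hL i hi a ⟨2*i, by omega⟩
    rw [if_neg (show ¬((⟨2*i, by omega⟩ : Fin (p+1)) : ℕ) = 2*i+1 from by simp),
      if_pos (show ((⟨2*i, by omega⟩ : Fin (p+1)) : ℕ) = 2*i from rfl),
      if_neg ha1, if_neg ha2] at e
    linarith [e]
  -- row 2i off-block zero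
  have hr1 : ∀ i, i < l → ∀ b : Fin (p+1), (b:ℕ) ≠ 2*i → (b:ℕ) ≠ 2*i+1 →
      ∀ (ha : 2*i < p+1), A ⟨2*i, ha⟩ b = 0 := by
    intro i hi b hb1 hb2 ha
    have e := hL i hi ⟨2*i+1, by omega⟩ b
    rw [if_neg hb2, if_neg hb1,
      if_neg (show ¬((⟨2*i+1, by omega⟩ : Fin (p+1)) : ℕ) = 2*i from by simp),
      if_pos (show ((⟨2*i+1, by omega⟩ : Fin (p+1)) : ℕ) = 2*i+1 from rfl)] at e
    linarith [e]
  -- row 2i+1 off-block zero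
  have hr2 : ∀ i, i < l → ∀ b : Fin (p+1), (b:ℕ) ≠ 2*i → (b:ℕ) ≠ 2*i+1 →
      ∀ (ha : 2*i+1 < p+1), A ⟨2*i+1, ha⟩ b = 0 := by
    intro i hi b hb1 hb2 ha
    have e := hL i hi ⟨2*i, by omega⟩ b
    rw [if_neg hb2, if_neg hb1,
      if_pos (show ((⟨2*i, by omega⟩ : Fin (p+1)) : ℕ) = 2*i from rfl)] at e
    exact e.symm
  -- antisymmetry in the block
  have hanti : ∀ i, i < l → ∀ (h1 : 2*i < p+1) (h2 : 2*i+1 < p+1),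
      A ⟨2*i+1, h2⟩ ⟨2*i, h1⟩ = -A ⟨2*i, h1⟩ ⟨2*i+1, h2⟩ := by
    intro i hi h1 h2
    have e := hL i hi ⟨2*i, h1⟩ ⟨2*i, h1⟩
    rw [if_neg (show ¬((⟨2*i, h1⟩ : Fin (p+1)) : ℕ) = 2*i+1 from by simp),
      if_pos (show ((⟨2*i, h1⟩ : Fin (p+1)) : ℕ) = 2*i from rfl),
      if_pos (show ((⟨2*i, h1⟩ : Fin (p+1)) : ℕ) = 2*i from rfl)] at e
    exact e.symm
  -- candidate decomposition
  have hbound1 : ∀ i : Fin l, 2*(i:ℕ) < p+1 := fun i => by have := i.isLt; omega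
  have hbound2 : ∀ i : Fin l, 2*(i:ℕ)+1 < p+1 := fun i => by have := i.isLt; omega
  have hbound3 : ∀ j : Fin (p - 2*l), 2*l+(j:ℕ) < p+1 := fun j => by have := j.isLt; omega
  set T : Matrix (Fin (p+1)) (Fin (p+1)) ℝ :=
    (∑ i : Fin l, A ⟨2*(i:ℕ), hbound1 i⟩ ⟨2*(i:ℕ)+1, hbound2 i⟩ • Lrot p (i:ℕ)) +
    (∑ j : Fin (p - 2*l), A ⟨2*l+(j:ℕ), hbound3 j⟩ (Fin.last p) • Ptr p (2*l+(j:ℕ)))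
    with hTdef
  have hT : T ∈ stdMASA p l := by
    apply Submodule.add_mem
    · exact Submodule.sum_mem _ fun i _ => Submodule.smul_mem _ _
        (Submodule.subset_span (Or.inl ⟨(i:ℕ), i.isLt, rfl⟩))
    · exact Submodule.sum_mem _ fun j _ => Submodule.smul_mem _ _
        (Submodule.subset_span (Or.inr ⟨2*l+(j:ℕ), by omega, by have := j.isLt; omega, rfl⟩))
  suffices hAT : A = T by rw [hAT]; exact hT
  ext a b
  have hAcong : ∀ (a a' b b' : Fin (p+1)), (a:ℕ) = (a':ℕ) → (b:ℕ) = (b':ℕ) →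
      A a b = A a' b' := by
    intro x x' y y' h1 h2
    rw [Fin.ext h1, Fin.ext h2]
  rw [hTdef]
  simp only [Matrix.add_apply, Matrix.sum_apply, Matrix.smul_apply, smul_eq_mul]
  -- zero-sum helpers
  have hLSum0 : ∀ f : Fin l → ℝ,
      (∀ i : Fin l, ¬(((a:ℕ) = 2*(i:ℕ) ∧ (b:ℕ) = 2*(i:ℕ)+1) ∨
        ((a:ℕ) = 2*(i:ℕ)+1 ∧ (b:ℕ) = 2*(i:ℕ)))) →
      ∑ i : Fin l, f i * Lrot p (i:ℕ) a b = 0 := by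
    intro f hcond
    apply Finset.sum_eq_zero
    intro i _
    have := hcond i
    simp only [Lrot, Matrix.of_apply]
    split_ifs <;> (first | (exfalso; omega) | simp)
  have hPSum0 : ∀ f : Fin (p - 2*l) → ℝ,
      (∀ j : Fin (p - 2*l), ¬((a:ℕ) = 2*l+(j:ℕ) ∧ (b:ℕ) = p)) →
      ∑ j : Fin (p - 2*l), f j * Ptr p (2*l+(j:ℕ)) a b = 0 := by
    intro f hcond
    apply Finset.sum_eq_zero
    intro j _
    have := hcond j
    simp only [Ptr, Matrix.of_apply]
    split_ifs <;> (first | (exfalso; omega) | simp)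
  rcases Nat.lt_or_ge (b:ℕ) p with hbp | hbp
  · -- b in the X-block columns
    have hbP : (b:ℕ) ≠ p := by omega
    rw [hPSum0 _ (fun j => by omega), add_zero]
    rcases Nat.lt_or_ge (b:ℕ) (2*l) with hbl | hbl
    · -- b < 2l : rotation block columns
      rcases Nat.even_or_odd (b:ℕ) with ⟨i0, hb0'⟩ | ⟨i0, hb0'⟩
      · -- b = 2*i0
        have hb0 : (b:ℕ) = 2*i0 := by omega
        have hi0 : i0 < l := by omega
        by_cases ha1 : (a:ℕ) = 2*i0+1
        · -- the -c_i entry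
          rw [Finset.sum_eq_single (⟨i0, hi0⟩ : Fin l)]
          · show A a b = A ⟨2*i0, hbound1 ⟨i0, hi0⟩⟩ ⟨2*i0+1, hbound2 ⟨i0, hi0⟩⟩ *
                Lrot p i0 a b
            rw [show Lrot p i0 a b = -1 from by
                simp only [Lrot, Matrix.of_apply]
                split_ifs <;> (first | rfl | (exfalso; omega)),
              mul_neg_one]
            exact (hAcong a ⟨2*i0+1, by omega⟩ b ⟨2*i0, by omega⟩ ha1 hb0).trans
              (hanti i0 hi0 (by omega) (by omega))
          · intro i _ hne
            have hne' : (i:ℕ) ≠ i0 := by simpa [Fin.ext_iff] using hne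
            simp only [Lrot, Matrix.of_apply]
            split_ifs <;> (first | (exfalso; omega) | simp)
          · intro habs; exact absurd (Finset.mem_univ _) habs
        · by_cases ha2 : (a:ℕ) = 2*i0
          · -- diagonal entry
            have eab : a = b := Fin.ext (by omega)
            rw [hLSum0 _ (fun i => by omega), eab, hdiag b (by omega)]
          · -- off-block column entry
            have eb : b = ⟨2*i0, by omega⟩ := Fin.ext (show (b:ℕ) = 2*i0 by omega)
            rw [hLSum0 _ (fun i => by omega), eb, hc1 i0 hi0 a ha2 ha1]
      · -- b = 2*i0+1
        have hb0 : (b:ℕ) = 2*i0+1 := by omega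
        have hi0 : i0 < l := by omega
        by_cases ha1 : (a:ℕ) = 2*i0
        · -- the c_i entry
          rw [Finset.sum_eq_single (⟨i0, hi0⟩ : Fin l)]
          · show A a b = A ⟨2*i0, hbound1 ⟨i0, hi0⟩⟩ ⟨2*i0+1, hbound2 ⟨i0, hi0⟩⟩ *
                Lrot p i0 a b
            rw [show Lrot p i0 a b = 1 from by
                simp only [Lrot, Matrix.of_apply]
                split_ifs <;> (first | rfl | (exfalso; omega)),
              mul_one]
            exact hAcong a ⟨2*i0, by omega⟩ b ⟨2*i0+1, by omega⟩ ha1 hb0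
          · intro i _ hne
            have hne' : (i:ℕ) ≠ i0 := by simpa [Fin.ext_iff] using hne
            simp only [Lrot, Matrix.of_apply]
            split_ifs <;> (first | (exfalso; omega) | simp)
          · intro habs; exact absurd (Finset.mem_univ _) habs
        · by_cases ha2 : (a:ℕ) = 2*i0+1
          · -- diagonal entry
            have eab : a = b := Fin.ext (by omega)
            rw [hLSum0 _ (fun i => by omega), eab, hdiag b (by omega)]
          · -- off-block column entry
            have eb : b = ⟨2*i0+1, by omega⟩ := Fin.ext (show (b:ℕ) = 2*i0+1 by omega)
            rw [hLSum0 _ (fun i => by omega), eb, hc2 i0 hi0 a ha1 ha2]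
    · -- 2l ≤ b < p : zero columns
      have eb : b = ⟨(b:ℕ), by omega⟩ := Fin.ext rfl
      rw [hLSum0 _ (fun i => by have := i.isLt; omega), eb, hcol (b:ℕ) hbl hbp a]
  · -- b = last column
    have hbP : (b:ℕ) = p := by have := b.isLt; omega
    rw [hLSum0 _ (fun i => by have := i.isLt; omega), zero_add]
    rcases Nat.lt_or_ge (a:ℕ) (2*l) with hal | hal
    · -- a in rotation rows: entry vanishes
      rw [hPSum0 _ (fun j => by omega)]
      rcases Nat.even_or_odd (a:ℕ) with ⟨i0, ha0'⟩ | ⟨i0, ha0'⟩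
      · have ha0 : (a:ℕ) = 2*i0 := by omega
        have hi0 : i0 < l := by omega
        have ea : a = ⟨2*i0, by omega⟩ := Fin.ext (show (a:ℕ) = 2*i0 by omega)
        rw [ea, hr1 i0 hi0 b (by omega) (by omega)]
      · have ha0 : (a:ℕ) = 2*i0+1 := by omega
        have hi0 : i0 < l := by omega
        have ea : a = ⟨2*i0+1, by omega⟩ := Fin.ext (show (a:ℕ) = 2*i0+1 by omega)
        rw [ea, hr2 i0 hi0 b (by omega) (by omega)]
    · rcases Nat.lt_or_ge (a:ℕ) p with hap | hap
      · -- the alpha entries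
        have hj0 : (a:ℕ) - 2*l < p - 2*l := by omega
        rw [Finset.sum_eq_single (⟨(a:ℕ) - 2*l, hj0⟩ : Fin (p - 2*l))]
        · show A a b = A ⟨2*l + ((a:ℕ) - 2*l), hbound3 ⟨(a:ℕ) - 2*l, hj0⟩⟩ (Fin.last p) *
              Ptr p (2*l + ((a:ℕ) - 2*l)) a b
          rw [show Ptr p (2*l + ((a:ℕ) - 2*l)) a b = 1 from by
              simp only [Ptr, Matrix.of_apply]
              rw [if_pos ⟨by omega, by omega⟩],
            mul_one]
          exact hAcong a ⟨2*l + ((a:ℕ) - 2*l), by omega⟩ b (Fin.last p)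
            (show (a:ℕ) = 2*l + ((a:ℕ) - 2*l) by omega) hbP
        · intro j _ hne
          have hne' : (j:ℕ) ≠ (a:ℕ) - 2*l := by simpa [Fin.ext_iff] using hne
          have := j.isLt
          simp only [Ptr, Matrix.of_apply]
          split_ifs <;> (first | (exfalso; omega) | simp)
        · intro habs; exact absurd (Finset.mem_univ _) habs
      · -- a = last row
        have ea : a = Fin.last p := Fin.ext (show (a:ℕ) = p by have := a.isLt; omega)
        rw [hPSum0 _ (fun j => by have := j.isLt; omega), ea, hrow b]
end Aux

theorem std_masa_is_masa (p l : ℕ) (h : 2*l ≤ p) :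
    (∀ A ∈ stdMASA p l, ∀ B ∈ stdMASA p l, A * B = B * A) ∧
    Module.finrank ℝ (stdMASA p l) = l + (p - 2*l) ∧
    (∀ A ∈ eucAlg p, (∀ B ∈ stdMASA p l, A * B = B * A) → A ∈ stdMASA p l) := by
  exact ⟨masa_comm h, finrank_stdMASA h, fun A hA hc => masa_max h hA hc⟩

end
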